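/- arXiv:2006.10087 — 4 statements merged into one kernel-verified Lean document; each statement's English description precedes it below -/
import Mathlib

section
/- Let P and Q be finite posets with natural labelings ω and τ (i.e., every cover relation is a weak edge). If supp_F(P,ω) ⊆ supp_F(Q,τ), then for every k ≥ 0, the maximum cardinality of a union of k antichains in P is less than or equal to the maximum cardinality of a union of k antichains in Q (equivalently, the antichain Greene shape of P is dominated by that of Q). -/
open scoped BigOperators

section CommonDefs

variable {α : Type*}

/-- A `(P,ω)`-partition: an order-preserving map from the poset to the positive
integers (encoded in `ℕ`, all values `≥ 1`), strictly increasing along strict edges. -/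
def IsPPart [PartialOrder α] (ω : α → ℕ) (f : α → ℕ) : Prop :=
  (∀ p, 1 ≤ f p) ∧ (∀ a b : α, a < b → f a ≤ f b) ∧
    ∀ a b : α, a < b → ω b < ω a → f a < f b

/-- The `(P,ω)`-partition enumerator `K_{(P,ω)}` as a formal power series in the
variables `x_1, x_2, …` (the variable indexed by `i : ℕ` stands for `x_{i+1}`). -/
noncomputable def Kgen [PartialOrder α] (ω : α → ℕ) : MvPowerSeries ℕ ℚ :=
  fun d => (Set.ncard {f : α → ℕ |
    IsPPart ω f ∧ ∀ i : ℕ, Set.ncard {p : α | f p = i + 1} = d i} : ℚ)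

/-- `K_{(P,ω)}` for a labeling by `Fin n`. -/
noncomputable def Kω [PartialOrder α] {n : ℕ} (ω : α ≃ Fin n) : MvPowerSeries ℕ ℚ :=
  Kgen fun p => ((ω p : ℕ))

open Classical in
/-- The monomial quasisymmetric function `M_α`. -/
noncomputable def Mgen {n : ℕ} (c : Composition n) : MvPowerSeries ℕ ℚ :=
  fun d => if (∃ g : Fin c.length → ℕ, StrictMono g ∧
      d = ∑ j : Fin c.length, Finsupp.single (g j) (c.blocksFun j)) then 1 else 0

/-- The partial-sum set `S(α) ⊆ {1,…,n−1}` of a composition of `n`. -/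
def compS {n : ℕ} (c : Composition n) : Finset ℕ :=
  (Finset.range (c.length - 1)).image fun i => c.sizeUpTo (i + 1)

open Classical in
/-- `F_{S,n} = Σ_{S ⊆ T ⊆ [n-1]} M_{T,n}`. -/
noncomputable def FgenSet (n : ℕ) (S : Finset ℕ) : MvPowerSeries ℕ ℚ :=
  ∑ c : Composition n, if S ⊆ compS c then Mgen c else 0

/-- The fundamental quasisymmetric function `F_α`. -/
noncomputable def Fgen {n : ℕ} (c : Composition n) : MvPowerSeries ℕ ℚ :=
  FgenSet n (compS c)

/-- `e : Fin n ≃ α` is a listing of the elements of the poset compatible with the order. -/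
def IsLinext [PartialOrder α] {n : ℕ} (e : Fin n ≃ α) : Prop :=
  ∀ i j : Fin n, e i < e j → i < j

/-- The set `L(P,ω)` of linear extensions, regarded as words (permutations of `Fin n`). -/
def Linext [PartialOrder α] {n : ℕ} (ω : α ≃ Fin n) : Set (Fin n → Fin n) :=
  {w | ∃ e : Fin n ≃ α, IsLinext e ∧ w = fun i => ω (e i)}

open Classical in
/-- Descent set of a word, with 1-based positions, a subset of `{1,…,n−1}`:
`i ∈ Des w` iff the letter in position `i` is greater than the letter in position `i+1`. -/
noncomputable def Des {n : ℕ} (w : Fin n → Fin n) : Finset ℕ :=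
  (Finset.Ioo 0 n).filter fun i =>
    ∃ hi : i < n, w ⟨i, hi⟩ < w ⟨i - 1, Nat.lt_of_le_of_lt (Nat.sub_le i 1) hi⟩

/-- The F-support: the set of descent compositions of linear extensions. -/
def suppF [PartialOrder α] {n : ℕ} (ω : α ≃ Fin n) : Set (Composition n) :=
  {c | ∃ w ∈ Linext ω, compS c = Des w}

/-- The M-support: compositions `α = (α_1,…,α_k)` realized as fiber sizes of a
`(P,ω)`-partition with all values at most `k`. -/
def suppM [PartialOrder α] {n : ℕ} (ω : α ≃ Fin n) : Set (Composition n) :=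
  {c | ∃ f : α → ℕ, IsPPart (fun p => ((ω p : ℕ))) f ∧ (∀ p, f p ≤ c.length) ∧
      ∀ i : Fin c.length, Set.ncard {p : α | f p = (i : ℕ) + 1} = c.blocksFun i}

/-- `A` is a non-negative linear combination of fundamental quasisymmetric functions. -/
def NonnegFComb (A : MvPowerSeries ℕ ℚ) : Prop :=
  ∃ (s : Finset ((n : ℕ) × Composition n)) (coef : ((n : ℕ) × Composition n) → ℚ),
    (∀ x, 0 ≤ coef x) ∧ A = ∑ x ∈ s, coef x • Fgen x.2

/-- `A` is a non-negative linear combination of monomial quasisymmetric functions. -/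
def NonnegMComb (A : MvPowerSeries ℕ ℚ) : Prop :=
  ∃ (s : Finset ((n : ℕ) × Composition n)) (coef : ((n : ℕ) × Composition n) → ℚ),
    (∀ x, 0 ≤ coef x) ∧ A = ∑ x ∈ s, coef x • Mgen x.2

/-- `A ≤_F B`. -/
def LeF (A B : MvPowerSeries ℕ ℚ) : Prop := NonnegFComb (B - A)

/-- `A ≤_M B`. -/
def LeM (A B : MvPowerSeries ℕ ℚ) : Prop := NonnegMComb (B - A)

/-- The order-reversing permutation of `Fin n`. -/
def finRevEquiv {n : ℕ} : Fin n ≃ Fin n :=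
  ⟨Fin.rev, Fin.rev, Fin.rev_rev, Fin.rev_rev⟩

def barLabel {n : ℕ} (ω : α ≃ Fin n) : α ≃ Fin n := ω.trans finRevEquiv

/-- The star involution: the dual poset with labels `ω*(a) = n+1−ω(a)`. -/
def starLabel {n : ℕ} (ω : α ≃ Fin n) : αᵒᵈ ≃ Fin n :=
  OrderDual.ofDual.trans (barLabel ω)

/-- The reverse of a composition. -/
def compRev {n : ℕ} (c : Composition n) : Composition n :=
  ⟨c.blocks.reverse, fun h => c.blocks_pos (List.mem_reverse.mp h), by
    rw [List.sum_reverse]; exact c.blocks_sum⟩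

/-- A saturated chain from `b` down to a minimal element, listed from top to bottom. -/
def IsDownChain [PartialOrder α] (b : α) (l : List α) : Prop :=
  l ≠ [] ∧ l.head? = some b ∧ List.Chain' (fun x y => y ⋖ x) l ∧
    ∀ x ∈ l.getLast?, IsMin x

/-- Number of strict edges in a top-to-bottom saturated chain. -/
def strictCountDown (ω : α → ℕ) (l : List α) : ℕ :=
  (l.zip l.tail).countP fun p => decide (ω p.1 < ω p.2)

/-- The jump of an element: the maximum number of strict edges on a saturated chain
from `b` down to a minimal element. -/
noncomputable def jumpOf [PartialOrder α] (ω : α → ℕ) (b : α) : ℕ :=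
  sSup {k | ∃ l : List α, IsDownChain b l ∧ strictCountDown ω l = k}

/-- The maximum jump of an element. -/
noncomputable def maxJump [PartialOrder α] [Fintype α] (ω : α → ℕ) : ℕ :=
  sSup {k | ∃ b : α, jumpOf ω b = k}

/-- The jump sequence `(j_0, …, j_k)` as a list. -/
noncomputable def jumpBlocks [PartialOrder α] [Fintype α] (ω : α → ℕ) : List ℕ :=
  (List.range (maxJump ω + 1)).map fun i => Set.ncard {b : α | jumpOf ω b = i}

/-- A maximal chain (saturated, from a minimal to a maximal element), bottom to top. -/
def IsMaxChainList [PartialOrder α] (l : List α) : Prop :=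
  l ≠ [] ∧ List.Chain' (· ⋖ ·) l ∧ (∀ x ∈ l.head?, IsMin x) ∧ ∀ x ∈ l.getLast?, IsMax x

/-- Number of strict edges in a bottom-to-top saturated chain. -/
def strictCountUp (ω : α → ℕ) (l : List α) : ℕ :=
  (l.zip l.tail).countP fun p => decide (ω p.2 < ω p.1)

/-- Number of weak edges in a bottom-to-top saturated chain. -/
def weakCountUp (ω : α → ℕ) (l : List α) : ℕ :=
  (l.zip l.tail).countP fun p => decide (ω p.1 < ω p.2)

/-- A weak convex subposet: convex, and all cover relations inside it are weak. -/
def IsWeakConvex [PartialOrder α] (ω : α → ℕ) (S : Set α) : Prop :=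
  (∀ ⦃x y z : α⦄, x < y → y < z → x ∈ S → z ∈ S → y ∈ S) ∧
    ∀ a ∈ S, ∀ b ∈ S, a ⋖ b → ω a < ω b

/-- The order relation of the assembled poset `𝒫[i → P_i]`. -/
def assembledLe {I : Type*} (PO : PartialOrder I) {X : I → Type*}
    (Pc : ∀ i, PartialOrder (X i)) (x y : Σ i, X i) : Prop :=
  PO.lt x.1 y.1 ∨ ∃ h : x.1 = y.1, (Pc y.1).le (h ▸ x.2) y.2

/-- The assembled poset `𝒫[i → P_i]` as a partial order on the disjoint union. -/
def assembledOrder {I : Type*} (PO : PartialOrder I) {X : I → Type*}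
    (Pc : ∀ i, PartialOrder (X i)) : PartialOrder (Σ i, X i) := by
  letI : PartialOrder I := PO
  letI instX : ∀ i, PartialOrder (X i) := Pc
  exact
  { le := assembledLe PO Pc
    lt := fun x y => assembledLe PO Pc x y ∧ ¬ assembledLe PO Pc y x
    lt_iff_le_not_ge := fun _ _ => Iff.rfl
    le_refl := fun x => Or.inr ⟨rfl, le_refl x.2⟩
    le_trans := by
      rintro ⟨i, p⟩ ⟨j, q⟩ ⟨k, r⟩ h1 h2
      rcases h1 with h1 | ⟨e1, h1⟩ <;> rcases h2 with h2 | ⟨e2, h2⟩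
      · exact Or.inl (lt_trans h1 h2)
      · dsimp only at e2 h2 ⊢; subst e2; exact Or.inl h1
      · dsimp only at e1 h1 ⊢; subst e1; exact Or.inl h2
      · dsimp only at e1 h1 e2 h2 ⊢; subst e1; subst e2
        exact Or.inr ⟨rfl, le_trans h1 h2⟩
    le_antisymm := by
      rintro ⟨i, p⟩ ⟨j, q⟩ h1 h2
      rcases h1 with h1 | ⟨e1, h1⟩ <;> rcases h2 with h2 | ⟨e2, h2⟩
      · exact absurd (lt_trans h1 h2) (lt_irrefl _)
      · dsimp only at e2 h2 ⊢; subst e2; exact absurd h1 (lt_irrefl _)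
      · dsimp only at e1 h1 ⊢; subst e1; exact absurd h2 (lt_irrefl _)
      · dsimp only at e1 h1 e2 h2 ⊢; subst e1
        obtain rfl : p = q := le_antisymm h1 h2
        rfl }

end CommonDefs


section AuxLemmas

open Finset

variable {α : Type*}

/-- A natural labeling is order-preserving. -/
lemma aux_natural_mono [PartialOrder α] [Fintype α] {n : ℕ} (ω : α ≃ Fin n)
    (h : ∀ a b : α, a ⋖ b → ω a < ω b) {a b : α} (hab : a < b) : ω a < ω b := by
  classical
  letI : LocallyFiniteOrder α := Fintype.toLocallyFiniteOrder
  have main : ∀ x y : α, Relation.TransGen (· ⋖ ·) x y → ω x < ω y := by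
    intro x y htg
    induction htg with
    | single h' => exact h _ _ h'
    | tail _ h' ih => exact ih.trans (h _ _ h')
  exact main _ _ (transGen_covBy_of_lt hab)

/-- Number of non-descents among positions `1..i`. -/
def runIdx (D : Finset ℕ) (i : ℕ) : ℕ := ((Finset.Icc 1 i).filter (fun j => j ∉ D)).card

lemma runIdx_eq_of (D : Finset ℕ) {i i' : ℕ} (hii : i ≤ i')
    (h : ∀ j, i < j → j ≤ i' → j ∈ D) : runIdx D i' = runIdx D i := by
  unfold runIdx
  congr 1
  ext j
  simp only [mem_filter, mem_Icc]
  constructor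
  · rintro ⟨⟨h1, h2⟩, h3⟩
    refine ⟨⟨h1, ?_⟩, h3⟩
    by_contra hc
    push_neg at hc
    exact h3 (h j hc h2)
  · rintro ⟨⟨h1, h2⟩, h3⟩
    exact ⟨⟨h1, h2.trans hii⟩, h3⟩

lemma runIdx_mem_of_eq {D : Finset ℕ} {i i' : ℕ} (hii : i ≤ i')
    (heq : runIdx D i = runIdx D i') {j : ℕ} (h1 : i < j) (h2 : j ≤ i') : j ∈ D := by
  by_contra hj
  have hsub : (Finset.Icc 1 i).filter (fun j => j ∉ D) ⊆
      (Finset.Icc 1 i').filter (fun j => j ∉ D) :=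
    Finset.filter_subset_filter _ (Finset.Icc_subset_Icc_right hii)
  have hlt : (Finset.Icc 1 i).filter (fun j => j ∉ D) ⊂
      (Finset.Icc 1 i').filter (fun j => j ∉ D) := by
    refine Finset.ssubset_iff_of_subset hsub |>.mpr ⟨j, ?_, ?_⟩
    · simp only [mem_filter, mem_Icc]
      exact ⟨⟨by omega, h2⟩, hj⟩
    · simp only [mem_filter, mem_Icc]
      rintro ⟨⟨_, hji⟩, _⟩
      omega
  have := Finset.card_lt_card hlt
  unfold runIdx at heq
  omega

lemma aux_mem_Des {n : ℕ} {w : Fin n → Fin n} {j : ℕ} :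
    j ∈ Des w ↔ 0 < j ∧ ∃ hj : j < n, w ⟨j, hj⟩ < w ⟨j - 1, by omega⟩ := by
  unfold Des
  rw [Finset.mem_filter, Finset.mem_Ioo]
  constructor
  · rintro ⟨⟨h0, _⟩, hn, hlt⟩
    exact ⟨h0, hn, hlt⟩
  · rintro ⟨h0, hj, hlt⟩
    exact ⟨⟨h0, hj⟩, hj, hlt⟩

lemma aux_le_of_des {n : ℕ} (w : Fin n → Fin n) {i i' : ℕ} (hii : i ≤ i') (hn : i' < n)
    (h : ∀ j, i < j → j ≤ i' → j ∈ Des w) :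
    w ⟨i', hn⟩ ≤ w ⟨i, by omega⟩ := by
  induction i', hii using Nat.le_induction with
  | base => exact le_refl _
  | succ m him ih =>
    have hd := h (m + 1) (by omega) le_rfl
    rw [aux_mem_Des] at hd
    obtain ⟨-, hj, hlt⟩ := hd
    simp only [Nat.add_sub_cancel] at hlt
    exact le_trans (le_of_lt hlt) (ih (by omega) (fun j hj1 hj2 => h j hj1 (by omega)))

lemma aux_exists_comp {n : ℕ} (D : Finset ℕ) (hD : ∀ j ∈ D, 0 < j ∧ j < n) :
    ∃ c : Composition n, compS c = D := by
  classical
  set B : Finset (Fin (n + 1)) :=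
    insert 0 (insert (Fin.last n) (D.attach.image fun j =>
      (⟨j.1, by have := hD j.1 j.2; omega⟩ : Fin (n + 1)))) with hB
  have hmemB : ∀ x : Fin (n + 1), x ∈ B ↔ x = 0 ∨ x = Fin.last n ∨ (x : ℕ) ∈ D := by
    intro x
    simp only [hB, Finset.mem_insert, Finset.mem_image, Finset.mem_attach, true_and,
      Subtype.exists]
    constructor
    · rintro (h | h | ⟨a, ha, rfl⟩)
      · exact Or.inl h
      · exact Or.inr (Or.inl h)
      · exact Or.inr (Or.inr ha)
    · rintro (h | h | h)
      · exact Or.inl h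
      · exact Or.inr (Or.inl h)
      · exact Or.inr (Or.inr ⟨(x : ℕ), h, by ext; rfl⟩)
  set cs : CompositionAsSet n :=
    ⟨B, by simp [hB], by simp [hB]⟩ with hcs
  set c := cs.toComposition with hc
  have hlen : c.length = cs.length := cs.toComposition_length
  have hblocks : c.blocks = cs.blocks := cs.toComposition_blocks
  have hcard : cs.boundaries.card = cs.length + 1 := cs.card_boundaries_eq_succ_length
  have hsize : ∀ i : ℕ, ∀ h : i < cs.boundaries.card,
      c.sizeUpTo i = (cs.boundary ⟨i, h⟩ : ℕ) := by
    intro i hi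
    have := cs.blocks_partial_sum hi
    rw [← hblocks] at this
    exact this
  refine ⟨c, ?_⟩
  ext x
  unfold compS
  simp only [Finset.mem_image, Finset.mem_range]
  constructor
  · rintro ⟨i, hi, rfl⟩
    have hlenpos : 0 < c.length := by omega
    have hi1 : i + 1 < cs.boundaries.card := by omega
    have hmem : cs.boundary ⟨i + 1, hi1⟩ ∈ cs.boundaries :=
      Finset.orderEmbOfFin_mem _ _ _
    have hval := hsize (i + 1) hi1
    have hb := (hmemB _).mp hmem
    have hpos : 0 < c.sizeUpTo (i + 1) := by
      have h0 : c.sizeUpTo 0 < c.sizeUpTo 1 := c.sizeUpTo_strict_mono (by omega)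
      have h1 : c.sizeUpTo 1 ≤ c.sizeUpTo (i + 1) := c.monotone_sizeUpTo (by omega)
      rw [c.sizeUpTo_zero] at h0
      omega
    have hltn : c.sizeUpTo (i + 1) < n := by
      have h0 : c.sizeUpTo (i + 1) < c.sizeUpTo (i + 2) := c.sizeUpTo_strict_mono (by omega)
      have h1 : c.sizeUpTo (i + 2) ≤ c.sizeUpTo c.length := c.monotone_sizeUpTo (by omega)
      rw [c.sizeUpTo_length] at h1
      omega
    rcases hb with h0 | h0 | h0
    · exfalso
      have : ((cs.boundary ⟨i + 1, hi1⟩ : Fin (n + 1)) : ℕ) = 0 := by rw [h0]; rfl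
      omega
    · exfalso
      have : ((cs.boundary ⟨i + 1, hi1⟩ : Fin (n + 1)) : ℕ) = n := by rw [h0]; rfl
      omega
    · rwa [hval]
  · intro hx
    have hxn : 0 < x ∧ x < n := hD x hx
    have hfd : (⟨x, by omega⟩ : Fin (n + 1)) ∈ cs.boundaries := by
      rw [show cs.boundaries = B from rfl, hmemB]
      exact Or.inr (Or.inr hx)
    rw [CompositionAsSet.mem_boundaries_iff_exists_blocks_sum_take_eq] at hfd
    obtain ⟨i, hi, hsum⟩ := hfd
    have hsum' : c.sizeUpTo i = x := by
      have : (c.blocks.take i).sum = x := by rw [hblocks]; exact_mod_cast hsum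
      exact this
    have hipos : 0 < i := by
      rcases Nat.eq_zero_or_pos i with rfl | h'
      · rw [c.sizeUpTo_zero] at hsum'; omega
      · exact h'
    have hilen : i < c.length := by
      by_contra hcon
      push_neg at hcon
      have := c.sizeUpTo_ofLength_le i hcon
      omega
    refine ⟨i - 1, by omega, ?_⟩
    rw [show i - 1 + 1 = i by omega]
    exact hsum'

lemma aux_lexLt {n a1 a2 b1 b2 : ℕ} (hb1 : b1 < n)
    (h : a1 < a2 ∨ (a1 = a2 ∧ b1 < b2)) : a1 * n + b1 < a2 * n + b2 := by
  rcases h with hlt | ⟨rfl, hlt⟩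
  · have h2 : (a1 + 1) * n ≤ a2 * n := Nat.mul_le_mul_right n hlt
    rw [add_mul, one_mul] at h2
    omega
  · omega

lemma aux_lexUnique {n a1 a2 b1 b2 : ℕ} (hb1 : b1 < n) (hb2 : b2 < n)
    (h : a1 * n + b1 = a2 * n + b2) : a1 = a2 ∧ b1 = b2 := by
  rcases lt_trichotomy a1 a2 with hl | rfl | hl
  · have h2 : (a1 + 1) * n ≤ a2 * n := Nat.mul_le_mul_right n hl
    rw [add_mul, one_mul] at h2
    omega
  · omega
  · have h2 : (a2 + 1) * n ≤ a1 * n := Nat.mul_le_mul_right n hl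
    rw [add_mul, one_mul] at h2
    omega

lemma aux_sorted_equiv [Fintype α] {n : ℕ} (hn : Fintype.card α = n) (key : α → ℕ)
    (hinj : Function.Injective key) :
    ∃ e : Fin n ≃ α, ∀ i j : Fin n, i < j ↔ key (e i) < key (e j) := by
  classical
  set s : Finset ℕ := Finset.univ.image key with hs
  have hcard : s.card = n := by
    rw [hs, Finset.card_image_of_injective _ hinj, Finset.card_univ, hn]
  have hsmem : ∀ x ∈ s, ∃ a : α, key a = x := by
    intro x hx
    rw [hs, Finset.mem_image] at hx
    obtain ⟨a, _, ha⟩ := hx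
    exact ⟨a, ha⟩
  have hmem : ∀ i : Fin n, ∃ a : α, key a = s.orderEmbOfFin hcard i := fun i =>
    hsmem _ (Finset.orderEmbOfFin_mem s hcard i)
  choose g hg using hmem
  have ginj : Function.Injective g := by
    intro i j hij
    have h1 := hg i
    rw [hij, hg j] at h1
    exact ((s.orderEmbOfFin hcard).injective h1).symm
  have gbij : Function.Bijective g :=
    (Fintype.bijective_iff_injective_and_card g).2 ⟨ginj, by simp [hn]⟩
  refine ⟨Equiv.ofBijective g gbij, fun i j => ?_⟩
  show i < j ↔ key (g i) < key (g j)
  rw [hg i, hg j]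
  exact ((s.orderEmbOfFin hcard).lt_iff_lt).symm

end AuxLemmas

section LevelFn

variable {α : Type*} [PartialOrder α] [Finite α]

open Finset

noncomputable def lvlF (S : Set α) : α → ℕ :=
  WellFounded.fix (IsWellFounded.wf (r := (· < · : α → α → Prop))) (fun x ih =>
    ((Set.toFinite {y | y < x ∧ y ∈ S}).toFinset).attach.sup fun y =>
      ih y.1 ((Set.Finite.mem_toFinset _).mp y.2).1 + 1)

lemma lvlF_eq (S : Set α) (x : α) :
    lvlF S x = ((Set.toFinite {y | y < x ∧ y ∈ S}).toFinset).attach.sup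
      (fun y => lvlF S y.1 + 1) := by
  unfold lvlF
  rw [WellFounded.fix_eq]

lemma lvlF_lt (S : Set α) {y x : α} (hyx : y < x) (hy : y ∈ S) :
    lvlF S y < lvlF S x := by
  conv_rhs => rw [lvlF_eq]
  have hmem : y ∈ (Set.toFinite {z | z < x ∧ z ∈ S}).toFinset :=
    (Set.Finite.mem_toFinset _).mpr ⟨hyx, hy⟩
  have h2 := Finset.le_sup (f := fun z : {z // z ∈ (Set.toFinite {z | z < x ∧ z ∈ S}).toFinset} =>
    lvlF S z.1 + 1) (Finset.mem_attach _ ⟨y, hmem⟩)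
  refine lt_of_lt_of_le (Nat.lt_succ_self _) ?_
  simpa using h2

lemma lvlF_chain (S : Set α) (x : α) :
    ∃ l : List α, l.Chain' (· < ·) ∧ (∀ y ∈ l, y ∈ S ∧ y < x) ∧ l.length = lvlF S x := by
  have main : ∀ N : ℕ, ∀ x : α, lvlF S x = N →
      ∃ l : List α, l.Chain' (· < ·) ∧ (∀ y ∈ l, y ∈ S ∧ y < x) ∧ l.length = lvlF S x := by
    intro N
    induction N using Nat.strong_induction_on with
    | _ N ih =>
      intro x hN
      rcases Finset.eq_empty_or_nonempty
        ((Set.toFinite {y | y < x ∧ y ∈ S}).toFinset) with he | hne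
      · refine ⟨[], List.isChain_nil, by simp, ?_⟩
        rw [lvlF_eq, he]
        simp
      · obtain ⟨y0, -, hy0⟩ := Finset.exists_mem_eq_sup
          ((Set.toFinite {y | y < x ∧ y ∈ S}).toFinset).attach
          (hne.attach) (fun y => lvlF S y.1 + 1)
        have hval : lvlF S x = lvlF S y0.1 + 1 := by rw [lvlF_eq, hy0]
        have hy0mem : y0.1 < x ∧ y0.1 ∈ S :=
          (Set.Finite.mem_toFinset (Set.toFinite {y | y < x ∧ y ∈ S})).mp y0.2
        have hlt : lvlF S y0.1 < N := by omega
        obtain ⟨l0, hch, hmem, hlen⟩ := ih _ hlt y0.1 rfl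
        refine ⟨l0 ++ [y0.1], ?_, ?_, ?_⟩
        · refine List.IsChain.append hch (List.isChain_singleton _) ?_
          intro a ha b hb
          simp only [List.head?_cons, Option.mem_def, Option.some.injEq] at hb
          subst hb
          exact (hmem a (List.mem_of_mem_getLast? ha)).2
        · intro y hy
          rcases List.mem_append.mp hy with hy | hy
          · exact ⟨(hmem y hy).1, lt_trans (hmem y hy).2 hy0mem.1⟩
          · simp only [List.mem_singleton] at hy
            subst hy
            exact ⟨hy0mem.2, hy0mem.1⟩
        · simp [hlen, hval]
  exact main (lvlF S x) x rfl

lemma lvlF_bound {k : ℕ} {A : Fin k → Set α} (hA : ∀ j, IsAntichain (· ≤ ·) (A j))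
    {x : α} (hx : x ∈ ⋃ j, A j) : lvlF (⋃ j, A j) x < k := by
  classical
  set S := ⋃ j, A j with hS
  obtain ⟨j0, hj0⟩ := Set.mem_iUnion.mp hx
  obtain ⟨l, hch, hmem, hlen⟩ := lvlF_chain S x
  set L := l ++ [x] with hL
  have hchL : L.Chain' (· < ·) := by
    refine List.IsChain.append hch (List.isChain_singleton _) ?_
    intro a ha b hb
    simp only [List.head?_cons, Option.mem_def, Option.some.injEq] at hb
    subst hb
    exact (hmem a (List.mem_of_mem_getLast? ha)).2
  have hmemL : ∀ y ∈ L, y ∈ S := by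
    intro y hy
    rcases List.mem_append.mp hy with hy | hy
    · exact (hmem y hy).1
    · simp only [List.mem_singleton] at hy
      subst hy
      exact hx
  have hpw : L.Pairwise (· < ·) := List.isChain_iff_pairwise.mp hchL
  have hjall : ∀ y : α, ∃ jy : Fin k, y ∈ S → y ∈ A jy := by
    intro y
    by_cases hy : y ∈ S
    · obtain ⟨j, hj⟩ := Set.mem_iUnion.mp hy
      exact ⟨j, fun _ => hj⟩
    · exact ⟨j0, fun hc => absurd hc hy⟩
  choose jf hjf using hjall
  have hpw3 : L.Pairwise (fun a b => jf a ≠ jf b) := by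
    refine List.Pairwise.imp_of_mem ?_ hpw
    intro a b ha hb hab hcon
    have ha' := hjf a (hmemL a ha)
    have hb' := hjf b (hmemL b hb)
    rw [hcon] at ha'
    exact (hA (jf b)) ha' hb' (ne_of_lt hab) (le_of_lt hab)
  have hpw2 : (L.map jf).Pairwise (· ≠ ·) := List.Pairwise.map jf (fun a b h => h) hpw3
  have hnd : (L.map jf).Nodup := hpw2
  have hle := hnd.length_le_card
  rw [List.length_map] at hle
  have hLlen : L.length = lvlF S x + 1 := by simp [hL, hlen]
  rw [Fintype.card_fin] at hle
  omega

end LevelFn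

lemma aux_between {n a A b : ℕ} (hb : b < n) (h1 : A * n ≤ a * n + b)
    (h2 : a * n + b < A * n + n) : a = A := by
  rcases lt_trichotomy a A with hl | hgoal | hl
  · have h3 : (a + 1) * n ≤ A * n := Nat.mul_le_mul_right n hl
    rw [add_mul, one_mul] at h3
    omega
  · exact hgoal
  · have h3 : (A + 1) * n ≤ a * n := Nat.mul_le_mul_right n hl
    rw [add_mul, one_mul] at h3
    omega

/-- for naturally labeled posets with `F`-support containment, unions of
`k` antichains in `P` are at most as large as in `Q`. -/
theorem stmt_11 {α β : Type*} [PartialOrder α] [PartialOrder β] [Fintype α] [Fintype β]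
    {n : ℕ} (ω : α ≃ Fin n) (τ : β ≃ Fin n)
    (hP : ∀ a b : α, a ⋖ b → ω a < ω b) (hQ : ∀ a b : β, a ⋖ b → τ a < τ b)
    (h : suppF ω ⊆ suppF τ) (k : ℕ) :
    sSup {m | ∃ A : Fin k → Set α,
        (∀ j, IsAntichain (· ≤ ·) (A j)) ∧ (⋃ j, A j).ncard = m} ≤
      sSup {m | ∃ A : Fin k → Set β,
        (∀ j, IsAntichain (· ≤ ·) (A j)) ∧ (⋃ j, A j).ncard = m} := by
  classical
  have hcardα : Fintype.card α = n := by
    rw [← Fintype.card_fin n]; exact Fintype.card_congr ω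
  set RS := {m | ∃ A : Fin k → Set β,
      (∀ j, IsAntichain (· ≤ ·) (A j)) ∧ (⋃ j, A j).ncard = m} with hRS
  have hbddR : BddAbove RS := by
    refine ⟨Fintype.card β, ?_⟩
    rintro m ⟨A, -, rfl⟩
    calc (⋃ j, A j).ncard ≤ (Set.univ : Set β).ncard :=
          Set.ncard_le_ncard (Set.subset_univ _) Set.finite_univ
      _ = Fintype.card β := by rw [Set.ncard_univ, Nat.card_eq_fintype_card]
  set LS := {m | ∃ A : Fin k → Set α,
      (∀ j, IsAntichain (· ≤ ·) (A j)) ∧ (⋃ j, A j).ncard = m} with hLS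
  have hbddL : BddAbove LS := by
    refine ⟨Fintype.card α, ?_⟩
    rintro m ⟨A, -, rfl⟩
    calc (⋃ j, A j).ncard ≤ (Set.univ : Set α).ncard :=
          Set.ncard_le_ncard (Set.subset_univ _) Set.finite_univ
      _ = Fintype.card α := by rw [Set.ncard_univ, Nat.card_eq_fintype_card]
  have hneL : LS.Nonempty := by
    refine ⟨0, fun _ => (∅ : Set α), fun j => ?_, by simp⟩
    intro a ha
    exact absurd ha (Set.notMem_empty a)
  obtain ⟨A, hA, hAm⟩ := Nat.sSup_mem hneL hbddL
  rw [← hAm]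
  rcases Nat.eq_zero_or_pos ((⋃ j, A j).ncard) with hm0 | hmpos
  · rw [hm0]; exact Nat.zero_le _
  set S := ⋃ j, A j with hS
  have hn0 : 0 < n := by
    obtain ⟨x, -⟩ := Set.nonempty_of_ncard_ne_zero (by omega : S.ncard ≠ 0)
    rw [← hcardα]
    exact Fintype.card_pos_iff.mpr ⟨x⟩
  have hPmono : ∀ a b : α, a < b → (ω a : ℕ) < (ω b : ℕ) := by
    intro a b hab
    exact aux_natural_mono ω hP hab
  have hQmono : ∀ a b : β, a < b → (τ a : ℕ) < (τ b : ℕ) := by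
    intro a b hab
    exact aux_natural_mono τ hQ hab
  set lvl : α → ℕ := lvlF S with hlvl
  set Af : α → ℕ := fun p =>
    ((Set.toFinite {y | y ∈ S ∧ y ≤ p}).toFinset).sup (fun y => lvl y + 1) with hAfdef
  set rho : α → ℕ := fun p =>
    if p ∈ S then 1 else if ∃ s ∈ S, Af s = Af p ∧ s < p then 2 else 0 with hrhodef
  set sig : α → ℕ := fun p => if p ∈ S then n - 1 - (ω p : ℕ) else (ω p : ℕ) with hsigdef
  set key : α → ℕ := fun p => (Af p * 3 + rho p) * n + sig p with hkeydef
  have hAf_mono : ∀ p q : α, p ≤ q → Af p ≤ Af q := by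
    intro p q hpq
    simp only [hAfdef]
    apply Finset.sup_mono
    intro y hy
    rw [Set.Finite.mem_toFinset] at hy ⊢
    exact ⟨hy.1, hy.2.trans hpq⟩
  have hAf_S : ∀ s ∈ S, Af s = lvl s + 1 := by
    intro s hs
    simp only [hAfdef]
    apply le_antisymm
    · apply Finset.sup_le
      intro y hy
      rw [Set.Finite.mem_toFinset] at hy
      rcases eq_or_lt_of_le hy.2 with rfl | hlt
      · exact le_refl _
      · have := lvlF_lt S hlt hy.1
        simp only [hlvl]
        omega
    · apply Finset.le_sup (f := fun y => lvl y + 1)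
      rw [Set.Finite.mem_toFinset]
      exact ⟨hs, le_refl s⟩
  have hsig_lt : ∀ p : α, sig p < n := by
    intro p
    have := (ω p).is_lt
    simp only [hsigdef]
    split_ifs <;> omega
  have hrho_lt : ∀ p : α, rho p < 3 := by
    intro p
    simp only [hrhodef]
    split_ifs <;> omega
  have hrho_one : ∀ p : α, rho p = 1 ↔ p ∈ S := by
    intro p
    simp only [hrhodef]
    split_ifs with h1 h2 <;> simp [h1]
  have hkey_mono : ∀ p q : α, p < q → key p < key q := by
    intro p q hpq
    have hAle : Af p ≤ Af q := hAf_mono p q (le_of_lt hpq)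
    have h3p := hrho_lt p
    have h3q := hrho_lt q
    simp only [hkeydef]
    apply aux_lexLt (hsig_lt p)
    rcases eq_or_lt_of_le hAle with hAeq | hAlt
    swap
    · left; omega
    by_cases hpS : p ∈ S <;> by_cases hqS : q ∈ S
    · exfalso
      have h1 : lvl p < lvl q := lvlF_lt S hpq hpS
      have h2 := hAf_S p hpS
      have h3 := hAf_S q hqS
      omega
    · have hrp : rho p = 1 := (hrho_one p).mpr hpS
      have hrq : rho q = 2 := by
        simp only [hrhodef]
        rw [if_neg hqS, if_pos ⟨p, hpS, hAeq, hpq⟩]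
      left; omega
    · have hrq : rho q = 1 := (hrho_one q).mpr hqS
      have hrp : rho p = 0 := by
        simp only [hrhodef]
        rw [if_neg hpS, if_neg]
        rintro ⟨s, hsS, hsAf, hsp⟩
        have h1 : lvl s < lvl q := lvlF_lt S (lt_trans hsp hpq) hsS
        have h2 := hAf_S s hsS
        have h3 := hAf_S q hqS
        omega
      left; omega
    · have hsigpq : sig p < sig q := by
        simp only [hsigdef]
        rw [if_neg hpS, if_neg hqS]
        exact hPmono p q hpq
      by_cases hw : ∃ s ∈ S, Af s = Af p ∧ s < p
      · have hrp : rho p = 2 := by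
          simp only [hrhodef]
          rw [if_neg hpS, if_pos hw]
        have hrq : rho q = 2 := by
          obtain ⟨s, hsS, hsAf, hsp⟩ := hw
          simp only [hrhodef]
          rw [if_neg hqS, if_pos ⟨s, hsS, by omega, lt_trans hsp hpq⟩]
        right
        exact ⟨by omega, hsigpq⟩
      · have hrp : rho p = 0 := by
          simp only [hrhodef]
          rw [if_neg hpS, if_neg hw]
        by_cases hw2 : ∃ s ∈ S, Af s = Af q ∧ s < q
        · have hrq : rho q = 2 := by
            simp only [hrhodef]
            rw [if_neg hqS, if_pos hw2]
          left; omega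
        · have hrq : rho q = 0 := by
            simp only [hrhodef]
            rw [if_neg hqS, if_neg hw2]
          right
          exact ⟨by omega, hsigpq⟩
  have hkey_inj : Function.Injective key := by
    intro p q hpq'
    simp only [hkeydef] at hpq'
    obtain ⟨h1, h2⟩ := aux_lexUnique (hsig_lt p) (hsig_lt q) hpq'
    have hrp := hrho_lt p
    have hrq := hrho_lt q
    have hAeq : Af p = Af q := by omega
    have hreq : rho p = rho q := by omega
    have hSiff : p ∈ S ↔ q ∈ S := by rw [← hrho_one p, ← hrho_one q, hreq]
    have hωeq : (ω p : ℕ) = (ω q : ℕ) := by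
      by_cases hpS : p ∈ S
      · have hqS := hSiff.mp hpS
        simp only [hsigdef, if_pos hpS, if_pos hqS] at h2
        have := (ω p).is_lt
        have := (ω q).is_lt
        omega
      · have hqS : q ∉ S := fun hh => hpS (hSiff.mpr hh)
        simp only [hsigdef, if_neg hpS, if_neg hqS] at h2
        exact h2
    exact ω.injective (Fin.ext hωeq)
  obtain ⟨e, he⟩ := aux_sorted_equiv hcardα key hkey_inj
  have hlin : IsLinext e := fun i j hij => (he i j).mpr (hkey_mono _ _ hij)
  set w : Fin n → Fin n := fun i => ω (e i) with hwdef
  have hwL : w ∈ Linext ω := ⟨e, hlin, hwdef⟩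
  set D := Des w with hD
  have hDsub : ∀ j ∈ D, 0 < j ∧ j < n := by
    intro j hj
    rw [hD, aux_mem_Des] at hj
    obtain ⟨h0, hj', -⟩ := hj
    exact ⟨h0, hj'⟩
  obtain ⟨c, hc⟩ := aux_exists_comp D hDsub
  have hcF : c ∈ suppF ω := ⟨w, hwL, hc⟩
  obtain ⟨v, hvmem, hDv⟩ := h hcF
  obtain ⟨e', hlin', rfl⟩ := hvmem
  have hDD : Des (fun i => τ (e' i)) = D := by rw [← hDv, hc]
  -- the core run lemma
  have hrun : ∀ s t : α, s ∈ S → t ∈ S → lvl s = lvl t →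
      runIdx D ((e.symm s : Fin n) : ℕ) = runIdx D ((e.symm t : Fin n) : ℕ) := by
    have main : ∀ s t : α, s ∈ S → t ∈ S → lvl s = lvl t → key s ≤ key t →
        runIdx D ((e.symm s : Fin n) : ℕ) = runIdx D ((e.symm t : Fin n) : ℕ) := by
      intro s t hs ht hlv hkst
      have hAst : Af s = Af t := by rw [hAf_S s hs, hAf_S t ht, hlv]
      set is := e.symm s with his
      set it := e.symm t with hit
      have hes : e is = s := e.apply_symm_apply s
      have het : e it = t := e.apply_symm_apply t
      have hrs : rho s = 1 := (hrho_one s).mpr hs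
      have hrt : rho t = 1 := (hrho_one t).mpr ht
      have hks : key s = (Af s * 3 + 1) * n + sig s := by
        simp only [hkeydef, hrs]
      have hkt : key t = (Af s * 3 + 1) * n + sig t := by
        simp only [hkeydef, hrt, hAst]
      have hii : (is : ℕ) ≤ (it : ℕ) := by
        by_contra hcon
        push_neg at hcon
        have hlt2 : it < is := Fin.lt_def.mpr hcon
        have := (he it is).mp hlt2
        rw [hes, het] at this
        omega
      have hwin : ∀ u : Fin n, (is : ℕ) ≤ (u : ℕ) → (u : ℕ) ≤ (it : ℕ) →
          e u ∈ S ∧ Af (e u) = Af s := by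
        intro u hu1 hu2
        have hk1 : key s ≤ key (e u) := by
          rcases eq_or_lt_of_le hu1 with heqq | hltt
          · rw [show u = is from (Fin.ext heqq).symm, hes]
          · have : is < u := Fin.lt_def.mpr hltt
            have := (he is u).mp this
            rw [hes] at this
            exact le_of_lt this
        have hk2 : key (e u) ≤ key t := by
          rcases eq_or_lt_of_le hu2 with heqq | hltt
          · rw [show u = it from Fin.ext heqq, het]
          · have : u < it := Fin.lt_def.mpr hltt
            have := (he u it).mp this
            rw [het] at this
            exact le_of_lt this
        have hkeu : key (e u) = (Af (e u) * 3 + rho (e u)) * n + sig (e u) := by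
          simp only [hkeydef]
        have hbound := aux_between (n := n) (a := Af (e u) * 3 + rho (e u))
          (A := Af s * 3 + 1) (b := sig (e u)) (hsig_lt (e u))
          (by have := hsig_lt t; omega) (by have := hsig_lt t; omega)
        have hr3 := hrho_lt (e u)
        have hru : rho (e u) = 1 := by omega
        exact ⟨(hrho_one (e u)).mp hru, by omega⟩
      symm
      apply runIdx_eq_of D hii
      intro j hj1 hj2
      have hjn : j < n := lt_of_le_of_lt hj2 it.is_lt
      have hj0 : 0 < j := by omega
      set ju : Fin n := ⟨j, hjn⟩ with hju'
      set jd : Fin n := ⟨j - 1, by omega⟩ with hjd'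
      have hju := hwin ju (by simp [hju']; omega) (by simp [hju']; omega)
      have hjd := hwin jd (by simp [hjd']; omega) (by simp [hjd']; omega)
      have hklt : key (e jd) < key (e ju) := by
        apply (he jd ju).mp
        apply Fin.lt_def.mpr
        simp [hju', hjd']
        omega
      have hrju : rho (e ju) = 1 := (hrho_one _).mpr hju.1
      have hrjd : rho (e jd) = 1 := (hrho_one _).mpr hjd.1
      have hkju : key (e ju) = (Af s * 3 + 1) * n + sig (e ju) := by
        simp only [hkeydef, hrju, hju.2]
      have hkjd : key (e jd) = (Af s * 3 + 1) * n + sig (e jd) := by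
        simp only [hkeydef, hrjd, hjd.2]
      have hsiglt : sig (e jd) < sig (e ju) := by omega
      have hωlt : (ω (e ju) : ℕ) < (ω (e jd) : ℕ) := by
        have h1 := (ω (e ju)).is_lt
        have h2 := (ω (e jd)).is_lt
        simp only [hsigdef, if_pos hju.1, if_pos hjd.1] at hsiglt
        omega
      rw [hD, aux_mem_Des]
      exact ⟨hj0, hjn, Fin.lt_def.mpr hωlt⟩
    intro s t hs ht hlv
    rcases le_total (key s) (key t) with hk | hk
    · exact main s t hs ht hlv hk
    · exact (main t s ht hs hlv.symm hk).symm
  -- pick representatives per level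
  set ψ : ℕ → ℕ := fun i =>
    if hh : ∃ s, s ∈ S ∧ lvl s = i then runIdx D ((e.symm hh.choose : Fin n) : ℕ) else 0
    with hψdef
  have hψS : ∀ s ∈ S, runIdx D ((e.symm s : Fin n) : ℕ) = ψ (lvl s) := by
    intro s hs
    have hh : ∃ s', s' ∈ S ∧ lvl s' = lvl s := ⟨s, hs, rfl⟩
    simp only [hψdef]
    rw [dif_pos hh]
    exact hrun s hh.choose hs hh.choose_spec.1 hh.choose_spec.2.symm
  have hlvk : ∀ s ∈ S, lvl s < k := by
    intro s hs
    exact lvlF_bound hA hs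
  set C : Set (Fin n) := {i | ∃ j : Fin k, runIdx D (i : ℕ) = ψ (j : ℕ)} with hC
  have hSsub : S ⊆ e '' C := by
    intro s hs
    refine ⟨e.symm s, ⟨⟨lvl s, hlvk s hs⟩, hψS s hs⟩, e.apply_symm_apply s⟩
  set B : Fin k → Set β := fun j => e' '' {i : Fin n | runIdx D (i : ℕ) = ψ (j : ℕ)}
    with hB
  have hBanti : ∀ j, IsAntichain (· ≤ ·) (B j) := by
    intro j
    rintro q1 ⟨i1, hi1, rfl⟩ q2 ⟨i2, hi2, rfl⟩ hne hle
    have hlt : e' i1 < e' i2 := lt_of_le_of_ne hle hne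
    have hii : i1 < i2 := hlin' i1 i2 hlt
    have hvm : (τ (e' i1) : ℕ) < (τ (e' i2) : ℕ) := hQmono _ _ hlt
    have heq : runIdx D (i1 : ℕ) = runIdx D (i2 : ℕ) := by
      rw [Set.mem_setOf_eq] at hi1 hi2
      rw [hi1, hi2]
    have hdes : ∀ jj, (i1 : ℕ) < jj → jj ≤ (i2 : ℕ) → jj ∈ Des (fun i => τ (e' i)) := by
      intro jj hjj1 hjj2
      rw [hDD]
      exact runIdx_mem_of_eq (le_of_lt (Fin.lt_def.mp hii)) heq hjj1 hjj2
    have hled := aux_le_of_des (fun i => τ (e' i)) (le_of_lt (Fin.lt_def.mp hii))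
      i2.is_lt hdes
    have hled' : (τ (e' i2) : ℕ) ≤ (τ (e' i1) : ℕ) := by
      have h2 := Fin.le_def.mp hled
      simpa using h2
    omega
  have hunion : (⋃ j, B j) = e' '' C := by
    ext q
    simp only [hB, hC, Set.mem_iUnion, Set.mem_image, Set.mem_setOf_eq]
    constructor
    · rintro ⟨j, i, hi, rfl⟩
      exact ⟨i, ⟨j, hi⟩, rfl⟩
    · rintro ⟨i, ⟨j, hi⟩, rfl⟩
      exact ⟨j, i, hi, rfl⟩
  have hcount : S.ncard ≤ (⋃ j, B j).ncard := by
    rw [hunion]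
    calc S.ncard ≤ (e '' C).ncard := Set.ncard_le_ncard hSsub (Set.toFinite _)
      _ = C.ncard := Set.ncard_image_of_injective C e.injective
      _ = (e' '' C).ncard := (Set.ncard_image_of_injective C e'.injective).symm
  exact le_trans hcount (le_csSup hbddR ⟨B, hBanti, rfl⟩)
end

section
/- Let P and Q be partial orders on the same finite set X. Then S_<(P) ⊇ S_<(Q) if and only if there is a finite sequence of partial orders P = P_0, P_1, …, P_m = Q on X such that for each j, S_<(P_{j+1}) = S_<(P_j) ∖ {(a_j, b_j)} for some cover relation a_j ⋖_{P_j} b_j of P_j. -/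
open scoped BigOperators

section Aux
variable {X : Type*}

private lemma plt_trans (P : PartialOrder X) {x y z : X} (h1 : P.lt x y) (h2 : P.lt y z) :
    P.lt x z := @lt_trans X P.toPreorder _ _ _ h1 h2

private lemma plt_irrefl (P : PartialOrder X) (x : X) : ¬ P.lt x x := @lt_irrefl X P.toPreorder x

private lemma po_lt_ext (P Q : PartialOrder X) (h : ∀ x y, P.lt x y ↔ Q.lt x y) : P = Q := by
  refine PartialOrder.ext fun x y => ?_
  rw [@le_iff_lt_or_eq _ P, @le_iff_lt_or_eq _ Q, h]

/-- deletion of a cover edge -/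
private def delOrder (P : PartialOrder X) (a b : X)
    (hcov : ∀ c : X, ¬ (P.lt a c ∧ P.lt c b)) : PartialOrder X where
  le x y := x = y ∨ (P.lt x y ∧ (x, y) ≠ (a, b))
  lt x y := P.lt x y ∧ (x, y) ≠ (a, b)
  lt_iff_le_not_ge := by
    intro x y
    constructor
    · rintro ⟨h1, h2⟩
      refine ⟨Or.inr ⟨h1, h2⟩, ?_⟩
      rintro (rfl | ⟨h3, _⟩)
      · exact plt_irrefl P _ h1
      · exact plt_irrefl P _ (plt_trans P h1 h3)
    · rintro ⟨h1 | h1, h2⟩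
      · exact absurd (Or.inl h1.symm) h2
      · exact h1
  le_refl x := Or.inl rfl
  le_trans x y z h1 h2 := by
    rcases h1 with rfl | ⟨h1, hne1⟩
    · exact h2
    rcases h2 with rfl | ⟨h2, hne2⟩
    · exact Or.inr ⟨h1, hne1⟩
    refine Or.inr ⟨plt_trans P h1 h2, ?_⟩
    intro he
    have hxa : x = a := (Prod.mk.injEq _ _ _ _ ▸ he).1
    have hzb : z = b := (Prod.mk.injEq _ _ _ _ ▸ he).2
    exact hcov y ⟨hxa ▸ h1, hzb ▸ h2⟩
  le_antisymm x y h1 h2 := by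
    rcases h1 with rfl | ⟨h1, _⟩
    · rfl
    rcases h2 with rfl | ⟨h2, _⟩
    · rfl
    exact absurd (plt_trans P h1 h2) (plt_irrefl P x)

private lemma delOrder_lt (P : PartialOrder X) (a b : X)
    (hcov : ∀ c : X, ¬ (P.lt a c ∧ P.lt c b)) (x y : X) :
    (delOrder P a b hcov).lt x y ↔ (P.lt x y ∧ (x, y) ≠ (a, b)) := Iff.rfl

variable [Fintype X]

/-- find a cover of P in the difference -/
private lemma cover_exists (P Q : PartialOrder X)
    (hsub : ∀ x y : X, Q.lt x y → P.lt x y) :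
    ∀ (n : ℕ) (a b : X), P.lt a b → ¬ Q.lt a b →
      Set.ncard {c : X | P.lt a c ∧ P.lt c b} ≤ n →
      ∃ a' b' : X, P.lt a' b' ∧ ¬ Q.lt a' b' ∧ ∀ c : X, ¬ (P.lt a' c ∧ P.lt c b') := by
  intro n
  induction n with
  | zero =>
    intro a b hab hq hcard
    refine ⟨a, b, hab, hq, fun c hc => ?_⟩
    have : c ∈ {c : X | P.lt a c ∧ P.lt c b} := hc
    have hne : {c : X | P.lt a c ∧ P.lt c b}.Nonempty := ⟨c, hc⟩
    have := Set.ncard_pos (Set.toFinite _) |>.mpr hne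
    omega
  | succ n ih =>
    intro a b hab hq hcard
    by_cases hcovers : ∀ c : X, ¬ (P.lt a c ∧ P.lt c b)
    · exact ⟨a, b, hab, hq, hcovers⟩
    push_neg at hcovers
    obtain ⟨c, hac, hcb⟩ := hcovers
    have hnotboth : ¬ Q.lt a c ∨ ¬ Q.lt c b := by
      by_contra h
      push_neg at h
      exact hq (plt_trans Q h.1 h.2)
    -- intervals shrink
    have key : ∀ u v : X, P.lt u v →
        {d : X | P.lt u d ∧ P.lt d v} ⊆ {d : X | P.lt a d ∧ P.lt d b} →
        c ∉ {d : X | P.lt u d ∧ P.lt d v} →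
        Set.ncard {d : X | P.lt u d ∧ P.lt d v} ≤ n := by
      intro u v huv hss hcnot
      have hss2 : {d : X | P.lt u d ∧ P.lt d v} ⊂ {d : X | P.lt a d ∧ P.lt d b} :=
        ⟨hss, fun h2 => hcnot (h2 ⟨hac, hcb⟩)⟩
      have := Set.ncard_lt_ncard hss2 (Set.toFinite _)
      omega
    rcases hnotboth with h | h
    · refine ih a c hac h (key a c hac ?_ ?_)
      · rintro d ⟨h1, h2⟩; exact ⟨h1, plt_trans P h2 hcb⟩
      · rintro ⟨_, h2⟩; exact plt_irrefl P c h2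
    · refine ih c b hcb h (key c b hcb ?_ ?_)
      · rintro d ⟨h1, h2⟩; exact ⟨plt_trans P hac h1, h2⟩
      · rintro ⟨h1, _⟩; exact plt_irrefl P c h1

private lemma main_ind (Q : PartialOrder X) :
    ∀ (n : ℕ) (P : PartialOrder X), (∀ x y : X, Q.lt x y → P.lt x y) →
      Set.ncard {p : X × X | P.lt p.1 p.2 ∧ ¬ Q.lt p.1 p.2} ≤ n →
      ∃ (m : ℕ) (R : ℕ → PartialOrder X), R 0 = P ∧ R m = Q ∧
        ∀ j < m, ∃ a b : X,
          ((R j).lt a b ∧ ∀ c : X, ¬ ((R j).lt a c ∧ (R j).lt c b)) ∧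
          ∀ x y : X, (R (j + 1)).lt x y ↔ ((R j).lt x y ∧ (x, y) ≠ (a, b)) := by
  intro n
  induction n with
  | zero =>
    intro P hsub hcard
    have hempty : {p : X × X | P.lt p.1 p.2 ∧ ¬ Q.lt p.1 p.2} = ∅ := by
      by_contra h
      have hne := Set.nonempty_iff_ne_empty.mpr h
      have := Set.ncard_pos (Set.toFinite _) |>.mpr hne
      omega
    have hPQ : P = Q := by
      refine po_lt_ext P Q fun x y => ⟨fun h => ?_, hsub x y⟩
      by_contra hq
      exact absurd (Set.eq_empty_iff_forall_notMem.mp hempty (x, y)) (by exact fun h2 => h2 ⟨h, hq⟩)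
    exact ⟨0, fun _ => P, rfl, by rw [hPQ], fun j hj => absurd hj (Nat.not_lt_zero j)⟩
  | succ n ih =>
    intro P hsub hcard
    by_cases hdiff : ∃ a b : X, P.lt a b ∧ ¬ Q.lt a b
    · obtain ⟨a0, b0, hab0, hq0⟩ := hdiff
      obtain ⟨a, b, hab, hq, hcov⟩ :=
        cover_exists P Q hsub (Set.ncard {c : X | P.lt a0 c ∧ P.lt c b0}) a0 b0 hab0 hq0 le_rfl
      set P' := delOrder P a b hcov with hP'
      have hP'lt : ∀ x y : X, P'.lt x y ↔ (P.lt x y ∧ (x, y) ≠ (a, b)) :=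
        delOrder_lt P a b hcov
      have hsub' : ∀ x y : X, Q.lt x y → P'.lt x y := by
        intro x y h
        rw [hP'lt]
        refine ⟨hsub x y h, ?_⟩
        rintro he
        obtain ⟨rfl, rfl⟩ : x = a ∧ y = b := Prod.mk.injEq _ _ _ _ ▸ he
        exact hq h
      have hcard' : Set.ncard {p : X × X | P'.lt p.1 p.2 ∧ ¬ Q.lt p.1 p.2} ≤ n := by
        have hss : {p : X × X | P'.lt p.1 p.2 ∧ ¬ Q.lt p.1 p.2} ⊂
            {p : X × X | P.lt p.1 p.2 ∧ ¬ Q.lt p.1 p.2} := by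
          constructor
          · rintro ⟨x, y⟩ ⟨h1, h2⟩
            exact ⟨(hP'lt x y |>.mp h1).1, h2⟩
          · intro h
            have := h (a := (a, b)) ⟨hab, hq⟩
            have h2 := (hP'lt a b).mp this.1
            exact h2.2 rfl
        have := Set.ncard_lt_ncard hss (Set.toFinite _)
        omega
      obtain ⟨m, R', hR0, hRm, hRstep⟩ := ih P' hsub' hcard'
      refine ⟨m + 1, fun j => if j = 0 then P else R' (j - 1), by simp, by simp [hRm], ?_⟩
      intro j hj
      rcases Nat.eq_zero_or_pos j with rfl | hjpos
      · refine ⟨a, b, ⟨hab, hcov⟩, ?_⟩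
        show ∀ x y : X, (R' (1 - 1)).lt x y ↔ (P.lt x y ∧ (x, y) ≠ (a, b))
        rw [show (1 : ℕ) - 1 = 0 from rfl, hR0]
        exact hP'lt
      · obtain ⟨a', b', hc', hs'⟩ := hRstep (j - 1) (by omega)
        refine ⟨a', b', ?_, ?_⟩
        · beta_reduce
          rw [if_neg (Nat.pos_iff_ne_zero.mp hjpos)]
          exact hc'
        · intro x y
          have : j + 1 - 1 = j - 1 + 1 := by omega
          beta_reduce
          rw [if_neg (Nat.pos_iff_ne_zero.mp hjpos), if_neg (Nat.succ_ne_zero j), this]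
          exact hs' x y
    · push_neg at hdiff
      have hPQ : P = Q := po_lt_ext P Q fun x y => ⟨hdiff x y, hsub x y⟩
      exact ⟨0, fun _ => P, rfl, by rw [hPQ], fun j hj => absurd hj (Nat.not_lt_zero j)⟩
end Aux

/-- `S_<(P) ⊇ S_<(Q)` iff `Q` is obtained from `P` by an ordered
sequence of deletions of cover relations. -/
theorem stmt_15 {X : Type*} [Fintype X] (P Q : PartialOrder X) :
    (∀ x y : X, Q.lt x y → P.lt x y) ↔
      ∃ (m : ℕ) (R : ℕ → PartialOrder X), R 0 = P ∧ R m = Q ∧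
        ∀ j < m, ∃ a b : X,
          ((R j).lt a b ∧ ∀ c : X, ¬ ((R j).lt a c ∧ (R j).lt c b)) ∧
          ∀ x y : X, (R (j + 1)).lt x y ↔ ((R j).lt x y ∧ (x, y) ≠ (a, b)) := by
  constructor
  · intro hsub
    exact main_ind Q _ P hsub le_rfl
  · rintro ⟨m, R, hR0, hRm, hstep⟩ x y hxy
    have key : ∀ j ≤ m, ∀ x y : X, (R j).lt x y → P.lt x y := by
      intro j
      induction j with
      | zero => intro _ x y h; rwa [hR0] at h
      | succ j ih =>
        intro hj x y h
        obtain ⟨a, b, _, hiff⟩ := hstep j (by omega)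
        exact ih (by omega) x y ((hiff x y |>.mp h).1)
    exact key m le_rfl x y (hRm ▸ hxy)
end

section
/- Let P be a finite poset with n elements, let E be a set of ordered pairs (a,b) of elements with a <_P b that contains all cover relations of P, and let ε : E → {weak, strict} be any assignment. Then there exists a bijection ω : P → {1,…,n} such that for every (a,b) ∈ E, ε(a,b) = weak if and only if ω(a) < ω(b), if and only if the relation D on P defined by a D b whenever ((a,b) ∈ E and ε(a,b) = weak) or ((b,a) ∈ E and ε(b,a) = strict) has no directed cycle (i.e., the transitive closure of D is irreflexive). -/
open scoped BigOperators

/-- Auxiliary: any transitive irreflexive relation on a finite type (with no ambient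
order) can be realized by a bijection to `Fin (card)`. -/
lemma exists_equiv_fin_of_strict {β : Type*} [Fintype β] (r : β → β → Prop)
    (hirr : ∀ a, ¬ r a a) (htrans : Transitive r) :
    ∃ ω : β ≃ Fin (Fintype.card β), ∀ a b, r a b → ω a < ω b := by
  classical
  set s : β → β → Prop := fun a b => r a b ∨ a = b with hs
  haveI : IsPartialOrder β s :=
    { refl := fun a => Or.inr rfl
      trans := by
        rintro a b c (h1 | rfl) (h2 | rfl)
        · exact Or.inl (htrans h1 h2)
        · exact Or.inl h1
        · exact Or.inl h2
        · exact Or.inr rfl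
      antisymm := by
        rintro a b (h1 | h1) (h2 | h2)
        · exact absurd (htrans h1 h2) (hirr a)
        · exact h2.symm
        · exact h1
        · exact h1 }
  obtain ⟨t, ht, hst⟩ := extend_partialOrder s
  set t' : β → β → Prop := fun a b => t a b ∧ a ≠ b with ht'
  haveI htSTO : IsStrictTotalOrder β t' :=
    { trichotomous := by
        intro a b
        rcases eq_or_ne a b with rfl | hne
        · exact fun _ _ => rfl
        · rcases ht.total a b with h | h
          · exact fun hab _ => (hab ⟨h, hne⟩).elim
          · exact fun _ hba => (hba ⟨h, hne.symm⟩).elim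
      irrefl := by rintro a ⟨_, hne⟩; exact hne rfl
      trans := by
        rintro a b c ⟨h1, hne1⟩ ⟨h2, hne2⟩
        refine ⟨ht.trans _ _ _ h1 h2, fun h => ?_⟩
        subst h
        exact hne1 (ht.antisymm _ _ h1 h2) }
  letI hd : DecidableRel t' := Classical.decRel _
  letI L : LinearOrder β := linearOrderOfSTO t'
  let e := monoEquivOfFin β rfl
  refine ⟨e.toEquiv.symm, fun a b h => ?_⟩
  have h' : t' a b := ⟨hst a b (Or.inl h), fun hh => by subst hh; exact hirr a h⟩
  exact e.symm.lt_iff_lt.mpr h'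

/-- an assignment of weak/strict to a set of relations containing all
covers is consistent with a labeling iff it has no bad cycle. (`ε p = true` = weak.) -/
theorem stmt_17 {α : Type*} [PartialOrder α] [Fintype α]
    (E : Set (α × α)) (hE1 : ∀ p ∈ E, p.1 < p.2)
    (hE2 : ∀ a b : α, a ⋖ b → (a, b) ∈ E)
    (ε : α × α → Bool) :
    (∃ ω : α ≃ Fin (Fintype.card α),
        ∀ p ∈ E, (ε p = true ↔ ω p.1 < ω p.2)) ↔
      ∀ x : α, ¬ Relation.TransGen
        (fun a b : α => ((a, b) ∈ E ∧ ε (a, b) = true) ∨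
          ((b, a) ∈ E ∧ ε (b, a) = false)) x x := by
  classical
  set D : α → α → Prop := fun a b : α => ((a, b) ∈ E ∧ ε (a, b) = true) ∨
      ((b, a) ∈ E ∧ ε (b, a) = false) with hD
  constructor
  · rintro ⟨ω, hω⟩ x hx
    have key : ∀ a b : α, D a b → ω a < ω b := by
      rintro a b (⟨hab, he⟩ | ⟨hba, he⟩)
      · exact (hω _ hab).mp he
      · have hne : b ≠ a := ne_of_lt (hE1 _ hba)
        have : ¬ ω b < ω a := fun h => by
          have := (hω _ hba).mpr h; simp [he] at this
        have hne' : ω b ≠ ω a := fun h => hne (ω.injective h)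
        omega
    have : ∀ a b : α, Relation.TransGen D a b → ω a < ω b := by
      intro a b h
      induction h with
      | single h => exact key _ _ h
      | tail _ h ih => exact ih.trans (key _ _ h)
    exact lt_irrefl _ (this x x hx)
  · intro hcyc
    have htr : Transitive (Relation.TransGen D) := fun _ _ _ => Relation.TransGen.trans
    have hirr : ∀ a, ¬ Relation.TransGen D a a := hcyc
    obtain ⟨ω, hω⟩ := exists_equiv_fin_of_strict (Relation.TransGen D) hirr
      (fun _ _ _ => Relation.TransGen.trans)
    refine ⟨ω, ?_⟩
    rintro ⟨a, b⟩ hab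
    have hne : a ≠ b := ne_of_lt (hE1 _ hab)
    constructor
    · intro he
      exact hω a b (Relation.TransGen.single (Or.inl ⟨hab, he⟩))
    · intro h
      by_contra he
      have he' : ε (a, b) = false := by
        cases hεab : ε (a, b)
        · rfl
        · exact absurd hεab he
      have : ω b < ω a := hω b a (Relation.TransGen.single (Or.inr ⟨hab, he'⟩))
      exact absurd (h.trans this) (lt_irrefl _)
end

section
/- Let I be a finite set with partial orders 𝒫 and 𝒬 such that every linear order on I extending 𝒫 also extends 𝒬. For each i ∈ I, let P_i and Q_i be partial orders on the same finite set X_i such that every linear order on X_i extending P_i also extends Q_i. Define the assembled partial order 𝒫[i→P_i] on the disjoint union ⨆_{i∈I} X_i by (j,p) ≤ (k,q) iff (j <_𝒫 k) or (j = k and p ≤_{P_j} q), and define 𝒬[i→Q_i] analogously. Then every linear order on ⨆_{i∈I} X_i extending 𝒫[i→P_i] also extends 𝒬[i→Q_i]. -/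
open scoped BigOperators

theorem key_refine {α : Type*} (P Q : PartialOrder α)
    (h : ∀ L : LinearOrder α, (∀ x y : α, P.le x y → L.le x y) →
      ∀ x y : α, Q.le x y → L.le x y) :
    ∀ x y : α, Q.le x y → P.le x y := by
  intro a b hab
  by_contra hnab
  let r : α → α → Prop := fun x y => P.le x y ∨ (P.le x b ∧ P.le a y)
  haveI : IsPartialOrder α r :=
    { refl := fun x => Or.inl (P.le_refl x)
      trans := by
        rintro x y z (hxy | ⟨hxb, hay⟩) (hyz | ⟨hyb, haz⟩)
        · exact Or.inl (P.le_trans _ _ _ hxy hyz)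
        · exact Or.inr ⟨P.le_trans _ _ _ hxy hyb, haz⟩
        · exact Or.inr ⟨hxb, P.le_trans _ _ _ hay hyz⟩
        · exact absurd (P.le_trans _ _ _ hay hyb) hnab
      antisymm := by
        rintro x y (hxy | ⟨hxb, hay⟩) (hyx | ⟨hyb, hax⟩)
        · exact P.le_antisymm _ _ hxy hyx
        · exact absurd (P.le_trans _ _ _ hax (P.le_trans _ _ _ hxy hyb)) hnab
        · exact absurd (P.le_trans _ _ _ hay (P.le_trans _ _ _ hyx hxb)) hnab
        · exact absurd (P.le_trans _ _ _ hay hyb) hnab }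
  obtain ⟨s, hs, hrs⟩ := extend_partialOrder r
  letI L' : LinearOrder α :=
    { le := s
      le_refl := hs.refl
      le_trans := fun x y z => hs.trans x y z
      le_antisymm := fun x y => hs.antisymm x y
      le_total := hs.total
      lt := fun x y => s x y ∧ ¬ s y x
      lt_iff_le_not_ge := fun _ _ => Iff.rfl
      toDecidableLE := Classical.decRel _ }
  have hPs : ∀ x y : α, P.le x y → s x y := fun x y hxy => hrs _ _ (Or.inl hxy)
  have hsab : s a b := h L' hPs a b hab
  have hsba : s b a := hrs _ _ (Or.inr ⟨P.le_refl b, P.le_refl a⟩)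
  exact hnab (hs.antisymm _ _ hsab hsba ▸ P.le_refl a)

/-- poset assembly preserves linear-extension containment. -/
theorem stmt_18 {I : Type*} [Fintype I] (PP QQ : PartialOrder I)
    (hframe : ∀ L : LinearOrder I, (∀ x y : I, PP.le x y → L.le x y) →
      ∀ x y : I, QQ.le x y → L.le x y)
    {X : I → Type*} [∀ i, Fintype (X i)]
    (Pc Qc : ∀ i, PartialOrder (X i))
    (hcomp : ∀ i, ∀ L : LinearOrder (X i),
      (∀ x y : X i, (Pc i).le x y → L.le x y) →
      ∀ x y : X i, (Qc i).le x y → L.le x y)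
    (L : LinearOrder (Σ i, X i))
    (hL : ∀ x y : Σ i, X i, assembledLe PP Pc x y → L.le x y) :
    ∀ x y : Σ i, X i, assembledLe QQ Qc x y → L.le x y := by
  have hIQ : ∀ x y : I, QQ.le x y → PP.le x y := key_refine PP QQ hframe
  have hXQ : ∀ i, ∀ x y : X i, (Qc i).le x y → (Pc i).le x y :=
    fun i => key_refine (Pc i) (Qc i) (hcomp i)
  rintro ⟨j, p⟩ ⟨k, q⟩ (hjk | ⟨e, hpq⟩)
  · apply hL
    left
    obtain ⟨h1, h2⟩ := (QQ.lt_iff_le_not_ge j k).mp hjk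
    refine (PP.lt_iff_le_not_ge j k).mpr ⟨hIQ _ _ h1, fun hkj => ?_⟩
    cases PP.le_antisymm _ _ (hIQ _ _ h1) hkj
    exact h2 h1
  · exact hL _ _ (Or.inr ⟨e, hXQ _ _ _ hpq⟩)
end
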